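/- Let X, Y have unit-norm columns and set Cˣ = XᵀX, Cʸ = YᵀY. Over the transportation polytope Π(p,q), minimizing the Gromov–Wasserstein objective Σ_{i,j,k,l} (Cˣ_{ik} − Cʸ_{jl})² Γ_{ij} Γ_{kl} is equivalent to maximizing ‖XΓYᵀ‖_F²: specifically, the GW objective equals pᵀ(Cˣ)²p + qᵀ(Cʸ)²q − 2‖XΓYᵀ‖_F² for every Γ ∈ Π(p,q). -/
import Mathlib


open Matrix BigOperators

/-- GW/Frobenius equivalence: for unit-norm columns and Cˣ = XᵀX, Cʸ = YᵀY, the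
Gromov–Wasserstein objective equals pᵀ(Cˣ)²p + qᵀ(Cʸ)²q − 2‖X Γ Yᵀ‖_F² on Π(p,q),
so minimizing it is equivalent to maximizing ‖X Γ Yᵀ‖_F². -/
theorem gw_eq_frobenius_objective
    {d n m : ℕ} (X : Matrix (Fin d) (Fin n) ℝ) (Y : Matrix (Fin d) (Fin m) ℝ)
    (hX : ∀ i, ∑ k, (X k i) ^ 2 = 1) (hY : ∀ j, ∑ k, (Y k j) ^ 2 = 1)
    (p : Fin n → ℝ) (q : Fin m → ℝ)
    (hp0 : ∀ i, 0 ≤ p i) (hq0 : ∀ j, 0 ≤ q j)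
    (hp1 : ∑ i, p i = 1) (hq1 : ∑ j, q j = 1)
    (Γ : Matrix (Fin n) (Fin m) ℝ)
    (hΓ0 : ∀ i j, 0 ≤ Γ i j)
    (hΓp : ∀ i, ∑ j, Γ i j = p i) (hΓq : ∀ j, ∑ i, Γ i j = q j) :
    ∑ i, ∑ j, ∑ k, ∑ l, ((Xᵀ * X) i k - (Yᵀ * Y) j l) ^ 2 * Γ i j * Γ k l
      = (∑ i, ∑ k, p i * ((Xᵀ * X) i k) ^ 2 * p k)
        + (∑ j, ∑ l, q j * ((Yᵀ * Y) j l) ^ 2 * q l)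
        - 2 * ∑ a, ∑ b, ((X * Γ * Yᵀ) a b) ^ 2 := by
  set A := Xᵀ * X with hA
  set B := Yᵀ * Y with hB
  have L1 : ∑ i, ∑ j, ∑ k, ∑ l, (A i k) ^ 2 * Γ i j * Γ k l
      = ∑ i, ∑ k, p i * (A i k) ^ 2 * p k := by
    have h1 : ∀ i j k, ∑ l, (A i k) ^ 2 * Γ i j * Γ k l
        = (A i k) ^ 2 * Γ i j * p k := by
      intro i j k; rw [← Finset.mul_sum, hΓp]
    simp_rw [h1]
    refine Finset.sum_congr rfl fun i _ => ?_
    rw [Finset.sum_comm]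
    refine Finset.sum_congr rfl fun k _ => ?_
    have : ∀ j, (A i k) ^ 2 * Γ i j * p k = Γ i j * ((A i k) ^ 2 * p k) := by
      intro j; ring
    simp_rw [this, ← Finset.sum_mul, hΓp]
    ring
  have L2 : ∑ i, ∑ j, ∑ k, ∑ l, (B j l) ^ 2 * Γ i j * Γ k l
      = ∑ j, ∑ l, q j * (B j l) ^ 2 * q l := by
    -- swap (i j) and (k l) ordering
    have h1 : ∀ i j, ∑ k, ∑ l, (B j l) ^ 2 * Γ i j * Γ k l
        = ∑ l, (B j l) ^ 2 * Γ i j * q l := by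
      intro i j
      rw [Finset.sum_comm]
      refine Finset.sum_congr rfl fun l _ => ?_
      have : ∀ k, (B j l) ^ 2 * Γ i j * Γ k l = Γ k l * ((B j l) ^ 2 * Γ i j) := by
        intro k; ring
      simp_rw [this, ← Finset.sum_mul, hΓq]
      ring
    simp_rw [h1]
    rw [Finset.sum_comm]
    refine Finset.sum_congr rfl fun j _ => ?_
    rw [Finset.sum_comm]
    refine Finset.sum_congr rfl fun l _ => ?_
    have : ∀ i, (B j l) ^ 2 * Γ i j * q l = Γ i j * ((B j l) ^ 2 * q l) := by
      intro i; ring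
    simp_rw [this, ← Finset.sum_mul, hΓq]
    ring
  have hAs : ∀ i k, A k i = A i k := by
    intro i k
    simp [hA, Matrix.mul_apply, mul_comm]
  have L3 : ∑ a, ∑ b, ((X * Γ * Yᵀ) a b) ^ 2
      = ∑ i, ∑ j, ∑ k, ∑ l, A i k * B j l * Γ i j * Γ k l := by
    have gen : ∀ M : Matrix (Fin d) (Fin d) ℝ,
        Matrix.trace (M * Mᵀ) = ∑ a, ∑ b, (M a b) ^ 2 := by
      intro M
      simp [Matrix.trace, Matrix.diag, Matrix.mul_apply, sq, Matrix.transpose_apply]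
    rw [← gen (X * Γ * Yᵀ)]
    have step2 : X * Γ * Yᵀ * (X * Γ * Yᵀ)ᵀ = X * (Γ * B * Γᵀ * Xᵀ) := by
      rw [hB]
      simp only [Matrix.transpose_mul, Matrix.transpose_transpose]
      simp only [Matrix.mul_assoc]
    rw [step2, Matrix.trace_mul_comm]
    have step3 : Γ * B * Γᵀ * Xᵀ * X = Γ * B * Γᵀ * A := by
      rw [hA, Matrix.mul_assoc]
    rw [step3]
    simp only [Matrix.trace, Matrix.diag_apply, Matrix.mul_apply, Finset.sum_mul]
    simp only [Matrix.transpose_apply]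
    refine Finset.sum_congr rfl fun i _ => ?_
    refine Eq.trans (Finset.sum_congr rfl fun k _ => Finset.sum_comm) ?_
    rw [Finset.sum_comm]
    refine Finset.sum_congr rfl fun j _ => Finset.sum_congr rfl fun k _ =>
      Finset.sum_congr rfl fun l _ => ?_
    rw [hAs]
    ring
  have key : ∀ (i : Fin n) (j : Fin m) (k : Fin n) (l : Fin m),
      (A i k - B j l) ^ 2 * Γ i j * Γ k l
        = (A i k) ^ 2 * Γ i j * Γ k l + (B j l) ^ 2 * Γ i j * Γ k l
          - 2 * (A i k * B j l * Γ i j * Γ k l) := by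
    intro i j k l; ring
  have pull : ∑ i, ∑ j, ∑ k, ∑ l, 2 * (A i k * B j l * Γ i j * Γ k l)
      = 2 * ∑ i, ∑ j, ∑ k, ∑ l, A i k * B j l * Γ i j * Γ k l := by
    simp_rw [Finset.mul_sum]
  simp_rw [key, Finset.sum_sub_distrib, Finset.sum_add_distrib]
  rw [pull, L1, L2, ← L3]
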